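/- arXiv:2005.04898 — 10 statements merged into one kernel-verified Lean document; each statement's English description precedes it below -/
import Mathlib

section
/- For all reals g > 0 and h, h_K > 0, the shock-branch value dominates the rarefaction-branch value: √((g/2)(h + h_K)(h − h_K)²/(h h_K)) ≥ 2(√(g h) − √(g h_K)). -/
/-- For the shallow water equations: the shock-branch value dominates the
rarefaction-branch value:
`√((g/2)(h + h_K)(h − h_K)²/(h h_K)) ≥ 2(√(g h) − √(g h_K))`. -/
theorem swe_shock_branch_dominates (g h hK : ℝ) (hg : 0 < g) (hh : 0 < h) (hhK : 0 < hK) :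
    Real.sqrt ((g / 2) * (h + hK) * (h - hK) ^ 2 / (h * hK))
      ≥ 2 * (Real.sqrt (g * h) - Real.sqrt (g * hK)) := by
  set s := g / 2 * (h + hK) * (h - hK) ^ 2 / (h * hK) with hs
  have hsnn : 0 ≤ s := by positivity
  rcases le_or_gt (Real.sqrt (g * h)) (Real.sqrt (g * hK)) with hle | hlt
  · have : 2 * (Real.sqrt (g * h) - Real.sqrt (g * hK)) ≤ 0 := by linarith
    exact le_trans this (Real.sqrt_nonneg _)
  · have hx : 0 ≤ 2 * (Real.sqrt (g * h) - Real.sqrt (g * hK)) := by linarith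
    rw [ge_iff_le, ← Real.sqrt_sq hx]
    apply Real.sqrt_le_sqrt
    set a := Real.sqrt h with ha
    set b := Real.sqrt hK with hb
    set sg := Real.sqrt g with hsg
    have ha2 : a ^ 2 = h := Real.sq_sqrt hh.le
    have hb2 : b ^ 2 = hK := Real.sq_sqrt hhK.le
    have hsg2 : sg ^ 2 = g := Real.sq_sqrt hg.le
    have hann : 0 < a := Real.sqrt_pos.mpr hh
    have hbnn : 0 < b := Real.sqrt_pos.mpr hhK
    have hsgnn : 0 ≤ sg := Real.sqrt_nonneg g
    have hga : Real.sqrt (g * h) = sg * a := Real.sqrt_mul hg.le h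
    have hgb : Real.sqrt (g * hK) = sg * b := Real.sqrt_mul hg.le hK
    rw [hga, hgb, hs, ← ha2, ← hb2, ← hsg2]
    rw [← sub_nonneg, div_sub' (by positivity : (a^2*b^2:ℝ) ≠ 0), le_div_iff₀ (by positivity)]
    have key : 0 ≤ sg ^ 2 * (a * b * (a - b) ^ 2) := by positivity
    have key2 : 0 ≤ sg ^ 2 * ((a ^ 2 - b ^ 2) ^ 2) := by positivity
    nlinarith [sq_nonneg (a - b), sq_nonneg (a + b), mul_pos hann hbnn,
      mul_nonneg (mul_nonneg hann.le hbnn.le) (sq_nonneg (a - b)), key, key2,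
      sq_nonneg (a*b*(a-b)), sq_nonneg (sg*(a-b)), sq_nonneg (sg*a*b*(a-b))]
end

section
/- For all h > 0, f(h) ≥ f^{RAR}(h), i.e., the shallow water depth function is pointwise bounded below by its two-rarefaction approximation. Consequently the two-rarefaction root h_{*rr} is an upper bound for the exact root h_* of f. -/
/-- Shallow water wave-curve branch function for a state with depth `hK`:
rarefaction branch for `h ≤ hK`, shock branch for `h > hK`. -/
noncomputable def sweBranch (g hK h : ℝ) : ℝ :=
  if h ≤ hK then 2 * (Real.sqrt (g * h) - Real.sqrt (g * hK))
  else Real.sqrt ((g / 2) * (h + hK) * (h - hK) ^ 2 / (h * hK))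

lemma sweBranch_ge (g hK h : ℝ) (hg : 0 < g) (hhK : 0 < hK) (hh : 0 < h) :
    sweBranch g hK h ≥ 2 * (Real.sqrt (g * h) - Real.sqrt (g * hK)) := by
  unfold sweBranch
  split_ifs with hc
  · exact le_refl _
  · push_neg at hc
    set a := Real.sqrt (g * h) with ha
    set b := Real.sqrt (g * hK) with hb
    have ha2 : a ^ 2 = g * h := Real.sq_sqrt (by positivity)
    have hb2 : b ^ 2 = g * hK := Real.sq_sqrt (by positivity)
    have ha0 : 0 < a := Real.sqrt_pos.mpr (by positivity)
    have hb0 : 0 < b := Real.sqrt_pos.mpr (by positivity)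
    have hab : b ≤ a := by
      rw [ha, hb]
      exact Real.sqrt_le_sqrt (by nlinarith)
    have hnn : 0 ≤ 2 * (a - b) := by linarith
    have eh : h = a ^ 2 / g := by rw [ha2]; field_simp
    have ehK : hK = b ^ 2 / g := by rw [hb2]; field_simp
    have key : (2 * (a - b)) ^ 2 ≤ (g / 2) * (h + hK) * (h - hK) ^ 2 / (h * hK) := by
      rw [eh, ehK, le_div_iff₀ (by positivity)]
      field_simp
      nlinarith [mul_nonneg (sq_nonneg ((a - b) ^ 2))
          (by positivity : (0:ℝ) ≤ a ^ 2 + 4 * a * b + b ^ 2)]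
    calc 2 * (a - b) = Real.sqrt ((2 * (a - b)) ^ 2) := (Real.sqrt_sq hnn).symm
      _ ≤ _ := Real.sqrt_le_sqrt key

/-- The shallow water depth function `f` is pointwise bounded below by its
two-rarefaction approximation `f^RAR`; consequently the two-rarefaction root
`h_{*rr}` is an upper bound for the exact root `h_*` of `f`. -/
theorem swe_depth_function_ge_two_rarefaction (g hL hR uL uR : ℝ)
    (hg : 0 < g) (hhL : 0 < hL) (hhR : 0 < hR) :
    (∀ h : ℝ, 0 < h →
      sweBranch g hL h + sweBranch g hR h + (uR - uL) ≥
        2 * (Real.sqrt (g * h) - Real.sqrt (g * hL))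
          + 2 * (Real.sqrt (g * h) - Real.sqrt (g * hR)) + (uR - uL)) ∧
    (∀ hstar hrr : ℝ, 0 < hstar → 0 < hrr →
      sweBranch g hL hstar + sweBranch g hR hstar + (uR - uL) = 0 →
      2 * (Real.sqrt (g * hrr) - Real.sqrt (g * hL))
        + 2 * (Real.sqrt (g * hrr) - Real.sqrt (g * hR)) + (uR - uL) = 0 →
      hstar ≤ hrr) := by
  have key : ∀ h : ℝ, 0 < h →
      sweBranch g hL h + sweBranch g hR h + (uR - uL) ≥
        2 * (Real.sqrt (g * h) - Real.sqrt (g * hL))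
          + 2 * (Real.sqrt (g * h) - Real.sqrt (g * hR)) + (uR - uL) := by
    intro h hh
    have h1 := sweBranch_ge g hL h hg hhL hh
    have h2 := sweBranch_ge g hR h hg hhR hh
    linarith
  refine ⟨key, fun hstar hrr hs hr heq hrreq => ?_⟩
  have h1 := key hstar hs
  rw [heq] at h1
  have h2 : Real.sqrt (g * hstar) ≤ Real.sqrt (g * hrr) := by linarith
  have h3 : g * hstar ≤ g * hrr :=
    (Real.sqrt_le_sqrt_iff (by positivity)).mp h2
  exact le_of_mul_le_mul_left h3 hg
end

section
/- For any g > 0 and h_K > 0, the shallow water wave-curve branch function f_K, defined by f_K(h) = 2(√(g h) − √(g h_K)) for 0 < h ≤ h_K and f_K(h) = √((g/2)(h + h_K)(h − h_K)²/(h h_K)) for h > h_K, is concave on (0, ∞). -/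
open Real Set Filter

private lemma sq_eq_of_nonneg {a b : ℝ} (ha : 0 ≤ a) (hb : 0 ≤ b) (h : a ^ 2 = b ^ 2) : a = b := by
  rw [← Real.sqrt_sq ha, ← Real.sqrt_sq hb, h]

-- equality with the factored shock form on [hK, ∞)
private lemma shock_eq (g hK : ℝ) (hg : 0 < g) (hhK : 0 < hK) {h : ℝ} (hh : hK ≤ h) :
    sweBranch g hK h = (h - hK) * Real.sqrt ((g / 2) * (h + hK) / (h * hK)) := by
  rcases eq_or_lt_of_le hh with rfl | hlt
  · simp [sweBranch]
  · rw [sweBranch, if_neg (not_le.mpr hlt)]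
    have harg : (g / 2) * (h + hK) * (h - hK) ^ 2 / (h * hK)
        = (h - hK) ^ 2 * ((g / 2) * (h + hK) / (h * hK)) := by ring
    rw [harg, Real.sqrt_mul (sq_nonneg _), Real.sqrt_sq (by linarith)]

private lemma rar_hasDerivAt (g hK : ℝ) (hg : 0 < g) {x : ℝ} (hx : 0 < x) :
    HasDerivAt (fun h => 2 * (Real.sqrt (g * h) - Real.sqrt (g * hK)))
      (Real.sqrt g / Real.sqrt x) x := by
  have hgx : g * x ≠ 0 := by positivity
  have h1 : HasDerivAt (fun h : ℝ => g * h) g x := by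
    simpa using (hasDerivAt_id x).const_mul g
  have h3 := ((h1.sqrt hgx).sub_const (Real.sqrt (g * hK))).const_mul 2
  convert h3 using 1
  · rfl
  · rfl
  rw [Real.sqrt_mul hg.le]
  have hg' : Real.sqrt g * Real.sqrt g = g := Real.mul_self_sqrt hg.le
  have hxs : (0:ℝ) < Real.sqrt x := Real.sqrt_pos.mpr hx
  have hgs : (0:ℝ) < Real.sqrt g := Real.sqrt_pos.mpr hg
  field_simp
  nlinarith [hg', hxs, hgs]

-- derivative of the factored shock form at hK
private lemma sbar_hasDerivAt_hK (g hK : ℝ) (hg : 0 < g) (hhK : 0 < hK) :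
    HasDerivAt (fun h => (h - hK) * Real.sqrt ((g / 2) * (h + hK) / (h * hK)))
      (Real.sqrt g / Real.sqrt hK) hK := by
  have hw : HasDerivAt (fun h : ℝ => (g / 2) * (h + hK) / (h * hK))
      (((g/2) * 1 * (hK * hK) - (g/2) * (hK + hK) * (1 * hK)) / (hK * hK) ^ 2) hK := by
    exact (((hasDerivAt_id hK).add_const hK).const_mul (g/2)).div
      ((hasDerivAt_id hK).mul_const hK) (by positivity)
  have hwval : (g / 2) * (hK + hK) / (hK * hK) = g / hK := by field_simp; ring
  have hwne : (g / 2) * (hK + hK) / (hK * hK) ≠ 0 := by rw [hwval]; positivity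
  have hv := hw.sqrt hwne
  have hu : HasDerivAt (fun h : ℝ => h - hK) 1 hK := (hasDerivAt_id hK).sub_const hK
  have := hu.mul hv
  convert this using 1
  · rfl
  · rfl
  · rfl
  simp only [sub_self, zero_mul, one_mul, add_zero, hwval]
  rw [Real.sqrt_div hg.le]

private lemma swe_hasDerivAt_hK (g hK : ℝ) (hg : 0 < g) (hhK : 0 < hK) :
    HasDerivAt (sweBranch g hK) (Real.sqrt g / Real.sqrt hK) hK := by
  have hleft : HasDerivWithinAt (sweBranch g hK) (Real.sqrt g / Real.sqrt hK) (Iic hK) hK := by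
    refine ((rar_hasDerivAt g hK hg hhK).hasDerivWithinAt).congr ?_ ?_
    · intro y hy; exact if_pos (mem_Iic.mp hy)
    · exact if_pos le_rfl
  have hright : HasDerivWithinAt (sweBranch g hK) (Real.sqrt g / Real.sqrt hK) (Ici hK) hK := by
    refine ((sbar_hasDerivAt_hK g hK hg hhK).hasDerivWithinAt).congr ?_ ?_
    · intro y hy; exact shock_eq g hK hg hhK hy
    · exact shock_eq g hK hg hhK le_rfl
  have := hleft.union hright
  rw [Iic_union_Ici] at this
  exact this.hasDerivAt (by simp)

noncomputable def sweD (g hK x : ℝ) : ℝ :=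
  Real.sqrt (g / (2 * hK)) * (2 * x ^ 2 + hK * x + hK ^ 2) /
    Real.sqrt (4 * x ^ 4 + 4 * hK * x ^ 3)

private lemma sweD_hK (g hK : ℝ) (hg : 0 < g) (hhK : 0 < hK) :
    sweD g hK hK = Real.sqrt g / Real.sqrt hK := by
  have h1 : (0:ℝ) ≤ sweD g hK hK := by
    unfold sweD; positivity
  have h2 : (0:ℝ) ≤ Real.sqrt g / Real.sqrt hK := by positivity
  refine sq_eq_of_nonneg h1 h2 ?_
  unfold sweD; rw [div_pow, mul_pow, div_pow,
    Real.sq_sqrt (by positivity : (0:ℝ) ≤ g / (2 * hK)),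
    Real.sq_sqrt (by positivity : (0:ℝ) ≤ 4 * hK ^ 4 + 4 * hK * hK ^ 3),
    Real.sq_sqrt hg.le, Real.sq_sqrt hhK.le]
  field_simp
  ring

private lemma swe_hasDerivAt_shock (g hK : ℝ) (hg : 0 < g) (hhK : 0 < hK) {x : ℝ}
    (hx : hK < x) : HasDerivAt (sweBranch g hK) (sweD g hK x) x := by
  have hx0 : 0 < x := hhK.trans hx
  -- the inner rational function q and its derivative
  have hq : HasDerivAt (fun h : ℝ => (g / 2) * (h + hK) * (h - hK) ^ 2 / (h * hK))
      (((((g/2) * 1) * (x - hK) ^ 2 + ((g/2) * (x + hK)) * (2 * (x - hK) ^ 1 * 1)) * (x * hK)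
        - ((g/2) * (x + hK) * (x - hK) ^ 2) * (1 * hK)) / ((x * hK) ^ 2)) x := by
    exact ((((hasDerivAt_id x).add_const hK).const_mul (g/2)).mul
      (((hasDerivAt_id x).sub_const hK).pow 2)).div
      ((hasDerivAt_id x).mul_const hK) (by positivity)
  have hsub : (0:ℝ) < x - hK := sub_pos.mpr hx
  have hqpos : 0 < (g / 2) * (x + hK) * (x - hK) ^ 2 / (x * hK) := by
    exact div_pos (mul_pos (mul_pos (by linarith : (0:ℝ) < g / 2) (by linarith : (0:ℝ) < x + hK)) (pow_pos hsub 2)) (by positivity)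
  have hs := hq.sqrt (ne_of_gt hqpos)
  -- sweBranch eventually equals the sqrt form near x
  have hev : sweBranch g hK =ᶠ[nhds x]
      (fun h => Real.sqrt ((g / 2) * (h + hK) * (h - hK) ^ 2 / (h * hK))) := by
    filter_upwards [Ioi_mem_nhds hx] with y hy
    exact if_neg (not_le.mpr hy)
  rw [hev.hasDerivAt_iff]
  convert hs using 1
  · rfl
  · rfl
  -- show sweD equals the computed derivative
  set qd := ((((g/2) * 1) * (x - hK) ^ 2 + ((g/2) * (x + hK)) * (2 * (x - hK) ^ 1 * 1)) * (x * hK)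
        - ((g/2) * (x + hK) * (x - hK) ^ 2) * (1 * hK)) / ((x * hK) ^ 2) with hqd
  have hqdval : qd = (g / (2 * hK)) * ((x - hK) * (2 * x ^ 2 + hK * x + hK ^ 2)) / x ^ 2 := by
    rw [hqd]
    field_simp
    ring
  have hqdpos : 0 ≤ qd := by
    rw [hqdval]
    positivity
  have hrhs : 0 ≤ qd / (2 * Real.sqrt ((g / 2) * (x + hK) * (x - hK) ^ 2 / (x * hK))) := by
    apply div_nonneg hqdpos
    positivity
  have hlhs : 0 ≤ sweD g hK x := by unfold sweD; positivity
  refine sq_eq_of_nonneg hlhs hrhs ?_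
  unfold sweD; rw [div_pow, div_pow, mul_pow, mul_pow,
    Real.sq_sqrt (by positivity : (0:ℝ) ≤ g / (2 * hK)),
    Real.sq_sqrt (by positivity : (0:ℝ) ≤ 4 * x ^ 4 + 4 * hK * x ^ 3),
    Real.sq_sqrt hqpos.le, hqdval]
  have hxne : x ≠ 0 := ne_of_gt hx0
  have hKne : hK ≠ 0 := ne_of_gt hhK
  have hsubne : x - hK ≠ 0 := ne_of_gt hsub
  field_simp
  ring

private lemma sweD_hasDeriv (g hK : ℝ) (hg : 0 < g) (hhK : 0 < hK) {x : ℝ} (hx : 0 < x) :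
    ∃ d, HasDerivAt (sweD g hK) d x ∧ d ≤ 0 := by
  have hRpos : (0:ℝ) < 4 * x ^ 4 + 4 * hK * x ^ 3 := by positivity
  have hR : HasDerivAt (fun y : ℝ => 4 * y ^ 4 + 4 * hK * y ^ 3)
      (4 * (4 * x ^ 3) + 4 * hK * (3 * x ^ 2)) x := by
    have := ((hasDerivAt_pow 4 x).const_mul 4).add ((hasDerivAt_pow 3 x).const_mul (4 * hK))
    convert this using 1
    · rfl
    · rfl
    · rfl
    all_goals ring_nf
  have hsR := hR.sqrt (ne_of_gt hRpos)
  have hN : HasDerivAt (fun y : ℝ => Real.sqrt (g / (2 * hK)) * (2 * y ^ 2 + hK * y + hK ^ 2))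
      (Real.sqrt (g / (2 * hK)) * (2 * (2 * x) + hK * 1)) x := by
    have := ((((hasDerivAt_pow 2 x).const_mul 2).add
      ((hasDerivAt_id x).const_mul hK)).add_const (hK ^ 2)).const_mul (Real.sqrt (g / (2 * hK)))
    convert this using 1
    · rfl
    · rfl
    · rfl
    all_goals ring_nf
  have hspos : (0:ℝ) < Real.sqrt (4 * x ^ 4 + 4 * hK * x ^ 3) := Real.sqrt_pos.mpr hRpos
  have hD := hN.div hsR (ne_of_gt hspos)
  refine ⟨_, hD, ?_⟩
  set s := Real.sqrt (4 * x ^ 4 + 4 * hK * x ^ 3) with hs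
  have hs2 : s ^ 2 = 4 * x ^ 4 + 4 * hK * x ^ 3 := Real.sq_sqrt hRpos.le
  apply div_nonpos_of_nonpos_of_nonneg _ (by positivity)
  have hnum : Real.sqrt (g / (2 * hK)) * (2 * (2 * x) + hK * 1) * s -
      Real.sqrt (g / (2 * hK)) * (2 * x ^ 2 + hK * x + hK ^ 2) *
        ((4 * (4 * x ^ 3) + 4 * hK * (3 * x ^ 2)) / (2 * s)) =
      Real.sqrt (g / (2 * hK)) * ((4 * x + hK) * s -
        (2 * x ^ 2 + hK * x + hK ^ 2) * ((16 * x ^ 3 + 12 * hK * x ^ 2) / (2 * s))) := by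
    ring
  rw [hnum]
  apply mul_nonpos_of_nonneg_of_nonpos (Real.sqrt_nonneg _)
  rw [sub_nonpos, ← mul_div_assoc, le_div_iff₀ (by positivity : (0:ℝ) < 2 * s)]
  have key : (4 * x + hK) * s * (2 * s) = 2 * (4 * x + hK) * s ^ 2 := by ring
  rw [hs2] at key
  rw [key]
  nlinarith [mul_pos (mul_pos hhK hhK) (mul_pos (mul_pos hx hx) hx),
    mul_pos (mul_pos (mul_pos hhK hhK) hhK) (mul_pos hx hx)]

private lemma sweD_antitoneOn (g hK : ℝ) (hg : 0 < g) (hhK : 0 < hK) :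
    AntitoneOn (sweD g hK) (Ici hK) := by
  have hmem : ∀ x ∈ Ici hK, 0 < x := fun x hx => lt_of_lt_of_le hhK hx
  apply antitoneOn_of_deriv_nonpos (convex_Ici hK)
  · intro x hx
    obtain ⟨d, hd, _⟩ := sweD_hasDeriv g hK hg hhK (hmem x hx)
    exact hd.continuousAt.continuousWithinAt
  · rw [interior_Ici]
    intro x hx
    obtain ⟨d, hd, _⟩ := sweD_hasDeriv g hK hg hhK (hhK.trans hx)
    exact hd.differentiableAt.differentiableWithinAt
  · rw [interior_Ici]
    intro x hx
    obtain ⟨d, hd, hd0⟩ := sweD_hasDeriv g hK hg hhK (hhK.trans hx)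
    rw [hd.deriv]
    exact hd0

/-- The shallow water wave-curve branch function is concave on `(0, ∞)`. -/
theorem swe_branch_concave (g hK : ℝ) (hg : 0 < g) (hhK : 0 < hK) :
    ConcaveOn ℝ (Set.Ioi (0 : ℝ)) (sweBranch g hK) := by
  set d : ℝ → ℝ := fun x => if x ≤ hK then Real.sqrt g / Real.sqrt x else sweD g hK x with hd
  have key : ∀ x ∈ Ioi (0:ℝ), HasDerivAt (sweBranch g hK) (d x) x := by
    intro x hx
    rcases lt_trichotomy x hK with h | h | h
    · rw [hd]; simp only [if_pos h.le]
      have hev : sweBranch g hK =ᶠ[nhds x]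
          (fun h => 2 * (Real.sqrt (g * h) - Real.sqrt (g * hK))) := by
        filter_upwards [Iio_mem_nhds h] with y hy
        exact if_pos (le_of_lt hy)
      rw [hev.hasDerivAt_iff]
      exact rar_hasDerivAt g hK hg hx
    · subst h
      rw [hd]; simp only [if_pos le_rfl]
      exact swe_hasDerivAt_hK g x hg hhK
    · rw [hd]; simp only [if_neg (not_le.mpr h)]
      exact swe_hasDerivAt_shock g hK hg hhK h
  have hderiv : ∀ x ∈ Ioi (0:ℝ), deriv (sweBranch g hK) x = d x :=
    fun x hx => (key x hx).deriv
  have hanti : AntitoneOn d (Ioi (0:ℝ)) := by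
    intro x hx y hy hxy
    have hx0 : (0:ℝ) < x := hx
    have hy0 : (0:ℝ) < y := hy
    have sqrt_mono : ∀ a b : ℝ, 0 < a → a ≤ b →
        Real.sqrt g / Real.sqrt b ≤ Real.sqrt g / Real.sqrt a := by
      intro a b ha hab
      apply div_le_div_of_nonneg_left (Real.sqrt_nonneg g) (Real.sqrt_pos.mpr ha)
      exact Real.sqrt_le_sqrt hab
    rw [hd]
    by_cases hxK : x ≤ hK
    · by_cases hyK : y ≤ hK
      · simp only [if_pos hxK, if_pos hyK]
        exact sqrt_mono x y hx0 hxy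
      · simp only [if_pos hxK, if_neg hyK]
        push_neg at hyK
        calc sweD g hK y ≤ sweD g hK hK :=
              sweD_antitoneOn g hK hg hhK self_mem_Ici (le_of_lt hyK) (le_of_lt hyK)
          _ = Real.sqrt g / Real.sqrt hK := sweD_hK g hK hg hhK
          _ ≤ Real.sqrt g / Real.sqrt x := sqrt_mono x hK hx0 hxK
    · have hyK : ¬ y ≤ hK := fun hc => hxK (hxy.trans hc)
      simp only [if_neg hxK, if_neg hyK]
      push_neg at hxK
      exact sweD_antitoneOn g hK hg hhK (le_of_lt hxK) (le_of_lt hxK |>.trans hxy) hxy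
  apply AntitoneOn.concaveOn_of_deriv (convex_Ioi 0)
  · exact fun x hx => (key x hx).continuousAt.continuousWithinAt
  · rw [interior_Ioi]
    exact fun x hx => (key x hx).differentiableAt.differentiableWithinAt
  · rw [interior_Ioi]
    intro x hx y hy hxy
    rw [hderiv x hx, hderiv y hy]
    exact hanti hx hy hxy
end

section
/- Let g > 0 and 0 < h_L < h_*, and suppose u_* = u_L − (h_* − h_L)√((g/2)(h_* + h_L)/(h_* h_L)) (the Rankine–Hugoniot jump relation across a left shock). Then u_* + √(g h_*) ≤ u_L + √(g h_L), i.e., the characteristic speed u_* + c_* in the star region is bounded above by u_L + c_L. -/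
/-- Across a left shock of the shallow water equations (Rankine–Hugoniot jump
relation, `h_L < h_*`), the characteristic speed `u_* + c_*` in the star region
is bounded above by `u_L + c_L`. -/
theorem swe_left_shock_characteristic_bound (g hL hstar uL ustar : ℝ)
    (hg : 0 < g) (hhL : 0 < hL) (hlt : hL < hstar)
    (hRH : ustar = uL - (hstar - hL) * Real.sqrt ((g / 2) * (hstar + hL) / (hstar * hL))) :
    ustar + Real.sqrt (g * hstar) ≤ uL + Real.sqrt (g * hL) := by
  have hhs : 0 < hstar := hhL.trans hlt
  set S := Real.sqrt ((g / 2) * (hstar + hL) / (hstar * hL)) with hSdef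
  have hSpos : 0 < S := Real.sqrt_pos.2 (by positivity)
  have hS2 : S ^ 2 = (g / 2) * (hstar + hL) / (hstar * hL) := Real.sq_sqrt (by positivity)
  have hS2' : S ^ 2 * (hstar * hL) = (g / 2) * (hstar + hL) := by
    rw [hS2]; field_simp
  set a := Real.sqrt (g * hstar) with hadef
  set b := Real.sqrt (g * hL) with hbdef
  have ha2 : a ^ 2 = g * hstar := Real.sq_sqrt (by positivity)
  have hb2 : b ^ 2 = g * hL := Real.sq_sqrt (by positivity)
  have ha : 0 < a := Real.sqrt_pos.2 (by positivity)
  have hb : 0 < b := Real.sqrt_pos.2 (by positivity)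
  have hab : b ≤ a := Real.sqrt_le_sqrt (by nlinarith)
  have hsq : g ^ 2 ≤ ((a + b) * S) ^ 2 := by
    nlinarith [sq_nonneg (a - b), sq_nonneg (a + b), sq_nonneg (a * b),
      mul_pos ha hb, mul_pos hhs hhL, sq_nonneg ((a - b) * (a + b)),
      mul_pos (mul_pos hg hg) (mul_pos hhs hhL)]
  have key : g ≤ (a + b) * S := by
    nlinarith [mul_pos (mul_pos (add_pos ha hb) hSpos) hg]
  have h1 : (a - b) * g ≤ (a - b) * ((a + b) * S) :=
    mul_le_mul_of_nonneg_left key (sub_nonneg.2 hab)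
  rw [hRH]
  nlinarith [h1, mul_pos hg hSpos]
end

section
/- For every real y > 0, the inequality (y − 1)(y^{3/2} − 1) ≥ 24 y (y^{1/4} − 1)² holds. -/
/-- For every real `y > 0`, `(y − 1)(y^{3/2} − 1) ≥ 24 y (y^{1/4} − 1)²`. -/
theorem bfe_shock_dominates_rarefaction_reduced (y : ℝ) (hy : 0 < y) :
    (y - 1) * (y ^ ((3 : ℝ) / 2) - 1) ≥ 24 * y * (y ^ ((1 : ℝ) / 4) - 1) ^ 2 := by
  set t : ℝ := y ^ ((1 : ℝ) / 4) with ht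
  have htpos : 0 < t := Real.rpow_pos_of_pos hy _
  have hy4 : y = t ^ 4 := by
    rw [ht, ← Real.rpow_natCast (y ^ ((1:ℝ)/4)) 4, ← Real.rpow_mul hy.le]
    norm_num
  have h32 : y ^ ((3 : ℝ) / 2) = t ^ 6 := by
    rw [ht, ← Real.rpow_natCast (y ^ ((1:ℝ)/4)) 6, ← Real.rpow_mul hy.le]
    norm_num
  rw [h32, hy4]
  nlinarith [sq_nonneg (t - 1), sq_nonneg (t^2 - 1), sq_nonneg (t^3 - 1),
    sq_nonneg (t^2 - t), sq_nonneg (t^3 - t), sq_nonneg (t^3 - t^2),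
    sq_nonneg (t^4 - t^3), sq_nonneg (t^4 - t^2), mul_pos htpos htpos,
    sq_nonneg ((t-1)*(t^2-1)), sq_nonneg ((t-1)*t), sq_nonneg ((t-1)^2*t),
    pow_pos htpos 2, pow_pos htpos 3, pow_pos htpos 4]
end

section
/- For every real y ≥ 0, the algebraic identity (y − 1)(y^{3/2} − 1) − 24 y (y^{1/4} − 1)² = (y^{1/4} − 1)⁴ (1 + 3 y^{1/4} + y^{1/2}) (1 + y^{1/4} + 6 y^{1/2} + y^{3/4} + y) holds; in particular the left-hand side is nonnegative for all y ≥ 0. -/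
/-- For every real `y ≥ 0`,
`(y − 1)(y^{3/2} − 1) − 24 y (y^{1/4} − 1)²
  = (y^{1/4} − 1)⁴ (1 + 3 y^{1/4} + y^{1/2})(1 + y^{1/4} + 6 y^{1/2} + y^{3/4} + y)`;
in particular the left-hand side is nonnegative. -/
theorem bfe_shock_rarefaction_factorization (y : ℝ) (hy : 0 ≤ y) :
    (y - 1) * (y ^ ((3 : ℝ) / 2) - 1) - 24 * y * (y ^ ((1 : ℝ) / 4) - 1) ^ 2
      = (y ^ ((1 : ℝ) / 4) - 1) ^ 4 * (1 + 3 * y ^ ((1 : ℝ) / 4) + y ^ ((1 : ℝ) / 2))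
          * (1 + y ^ ((1 : ℝ) / 4) + 6 * y ^ ((1 : ℝ) / 2) + y ^ ((3 : ℝ) / 4) + y) ∧
    0 ≤ (y - 1) * (y ^ ((3 : ℝ) / 2) - 1) - 24 * y * (y ^ ((1 : ℝ) / 4) - 1) ^ 2 := by
  set t := y ^ ((1 : ℝ) / 4) with ht
  have htnn : 0 ≤ t := Real.rpow_nonneg hy _
  have hpow : ∀ n : ℕ, y ^ ((n : ℝ) / 4) = t ^ n := by
    intro n
    rw [ht, ← Real.rpow_natCast (y ^ ((1 : ℝ) / 4)) n, ← Real.rpow_mul hy]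
    ring_nf
  have h2 : y ^ ((1 : ℝ) / 2) = t ^ 2 := by have := hpow 2; norm_num at this; exact this
  have h3 : y ^ ((3 : ℝ) / 4) = t ^ 3 := by have := hpow 3; norm_num at this; exact this
  have h6 : y ^ ((3 : ℝ) / 2) = t ^ 6 := by have := hpow 6; norm_num at this; exact this
  have h4 : y = t ^ 4 := by have := hpow 4; norm_num at this; exact this
  clear_value t
  constructor
  · rw [h2, h3, h6, h4]; ring
  · rw [h6, h4]
    nlinarith [sq_nonneg ((t-1)^2), sq_nonneg t, sq_nonneg (t-1), sq_nonneg (t*(t-1)), sq_nonneg (t^2*(t-1)), mul_nonneg htnn (sq_nonneg ((t-1)^2)), mul_nonneg (mul_nonneg htnn htnn) (sq_nonneg ((t-1)^2)), mul_nonneg (mul_nonneg (mul_nonneg htnn htnn) htnn) (sq_nonneg ((t-1)^2)), mul_nonneg (mul_nonneg (mul_nonneg (mul_nonneg htnn htnn) htnn) htnn) (sq_nonneg ((t-1)^2))]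
end

section
/- The function y ↦ √((2/3) y (y + √y + 1)/(√y + 1)) is strictly monotone increasing on (0, ∞). (For y ≠ 1 this function equals √((2/3)(y^{3/2} − 1) y/(y − 1)).) -/
/-- The blood flow shock-speed function `y ↦ √((2/3) y (y + √y + 1)/(√y + 1))`
is strictly monotone increasing on `(0, ∞)`; for `y ≠ 1` it equals
`√((2/3)(y^{3/2} − 1) y/(y − 1))`. -/
theorem bfe_shock_speed_factor_strictMono :
    StrictMonoOn
      (fun y : ℝ => Real.sqrt ((2 / 3) * y * (y + Real.sqrt y + 1) / (Real.sqrt y + 1)))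
      (Set.Ioi 0) ∧
    ∀ y : ℝ, 0 < y → y ≠ 1 →
      Real.sqrt ((2 / 3) * y * (y + Real.sqrt y + 1) / (Real.sqrt y + 1))
        = Real.sqrt ((2 / 3) * (y ^ ((3 : ℝ) / 2) - 1) * y / (y - 1)) := by
  constructor
  · intro a ha b hb hab
    simp only [Set.mem_Ioi] at ha hb
    obtain ⟨s, hs0, rfl⟩ : ∃ s, 0 < s ∧ s ^ 2 = a :=
      ⟨Real.sqrt a, Real.sqrt_pos.mpr ha, Real.sq_sqrt ha.le⟩
    obtain ⟨t, ht0, rfl⟩ : ∃ t, 0 < t ∧ t ^ 2 = b :=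
      ⟨Real.sqrt b, Real.sqrt_pos.mpr hb, Real.sq_sqrt hb.le⟩
    have hst : s < t := by nlinarith
    simp only [Real.sqrt_sq hs0.le, Real.sqrt_sq ht0.le]
    apply Real.sqrt_lt_sqrt
    · positivity
    · rw [div_lt_div_iff₀ (by positivity) (by positivity)]
      nlinarith [mul_pos hs0 ht0, mul_pos (mul_pos hs0 hs0) ht0,
        mul_pos (mul_pos hs0 ht0) ht0, sq_nonneg (s + t), sq_nonneg (s - t),
        mul_pos (mul_pos (mul_pos hs0 hs0) hs0) ht0,
        mul_pos (mul_pos (mul_pos hs0 ht0) ht0) ht0]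
  · intro y hy hy1
    have hs2 : Real.sqrt y ^ 2 = y := Real.sq_sqrt hy.le
    have hs0 : (0:ℝ) < Real.sqrt y := Real.sqrt_pos.mpr hy
    have h32 : y ^ ((3 : ℝ) / 2) = Real.sqrt y ^ 3 := by
      rw [show ((3:ℝ)/2) = (1/2) * 3 by norm_num, Real.rpow_mul hy.le,
        ← Real.sqrt_eq_rpow, ← Real.rpow_natCast (Real.sqrt y) 3]
      norm_num
    have hs1 : Real.sqrt y ≠ 1 := by
      intro h
      apply hy1
      rw [← hs2, h]; norm_num
    have hden1 : Real.sqrt y + 1 ≠ 0 := by positivity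
    have hden2 : y - 1 ≠ 0 := sub_ne_zero.mpr hy1
    congr 1
    rw [h32, ← hs2]
    have hden2' : Real.sqrt y ^ 2 - 1 ≠ 0 := by rw [hs2]; exact hden2
    field_simp
    rw [Real.sqrt_sq hs0.le]
    ring
end

section
/- For every real y ≥ 0, the inequality (y − 1)(y^{3/2} − 1) ≥ (3/2) y (y^{1/4} − 1)² holds; in particular, for y > 1, y^{1/4} − 1 ≤ √((2/3)(y − 1)(y^{3/2} − 1)/y). -/
/-- For every real `y ≥ 0`, `(y − 1)(y^{3/2} − 1) ≥ (3/2) y (y^{1/4} − 1)²`;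
in particular, for `y > 1`, `y^{1/4} − 1 ≤ √((2/3)(y − 1)(y^{3/2} − 1)/y)`. -/
theorem bfe_characteristic_bound_reduced (y : ℝ) (hy : 0 ≤ y) :
    (y - 1) * (y ^ ((3 : ℝ) / 2) - 1) ≥ (3 / 2) * y * (y ^ ((1 : ℝ) / 4) - 1) ^ 2 ∧
    (1 < y →
      y ^ ((1 : ℝ) / 4) - 1
        ≤ Real.sqrt ((2 / 3) * (y - 1) * (y ^ ((3 : ℝ) / 2) - 1) / y)) := by
  have ht0 : 0 ≤ y ^ ((1 : ℝ) / 4) := Real.rpow_nonneg hy _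
  set t := y ^ ((1 : ℝ) / 4) with ht
  have hy4 : y = t ^ 4 := by
    rw [ht, ← Real.rpow_natCast (y ^ ((1 : ℝ) / 4)) 4, ← Real.rpow_mul hy]
    norm_num
  have h32 : y ^ ((3 : ℝ) / 2) = t ^ 6 := by
    rw [ht, ← Real.rpow_natCast (y ^ ((1 : ℝ) / 4)) 6, ← Real.rpow_mul hy]
    norm_num
  have inner : (0 : ℝ) ≤ (t^3 + t^2 + t + 1) * (t^5 + t^4 + t^3 + t^2 + t + 1) - (3/2) * t^4 := by
    nlinarith [pow_nonneg ht0 2, pow_nonneg ht0 3, pow_nonneg ht0 4, pow_nonneg ht0 5,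
      pow_nonneg ht0 6, pow_nonneg ht0 7, pow_nonneg ht0 8, ht0]
  have key : (y - 1) * (y ^ ((3 : ℝ) / 2) - 1) ≥ (3 / 2) * y * (t - 1) ^ 2 := by
    rw [h32, hy4]
    nlinarith [mul_nonneg (sq_nonneg (t - 1)) inner]
  refine ⟨key, fun hy1 => ?_⟩
  have hypos : 0 < y := lt_trans one_pos hy1
  have ht1 : 1 ≤ t := by rw [ht]; exact Real.one_le_rpow hy1.le (by norm_num)
  have h6 : 1 ≤ y ^ ((3 : ℝ) / 2) := by rw [h32]; nlinarith [sq_nonneg (t^3 - 1)]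
  rw [show (2:ℝ)/3 * (y - 1) * (y ^ ((3 : ℝ) / 2) - 1) / y
      = ((y - 1) * (y ^ ((3 : ℝ) / 2) - 1)) * (2 / (3 * y)) by field_simp]
  rw [Real.le_sqrt (by linarith)]
  swap
  · exact mul_nonneg (mul_nonneg (by linarith) (by linarith)) (by positivity)
  rw [ge_iff_le, ← sub_nonneg] at key
  have h2 : 0 < 2 / (3 * y) := by positivity
  rw [← sub_nonneg]
  have := mul_nonneg key (le_of_lt h2)
  calc (0:ℝ) ≤ ((y - 1) * (y ^ ((3 : ℝ) / 2) - 1) - 3 / 2 * y * (t - 1) ^ 2) * (2 / (3 * y)) := this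
    _ = (y - 1) * (y ^ ((3 : ℝ) / 2) - 1) * (2 / (3 * y)) - (t - 1) ^ 2 := by
        field_simp
end

section
/- For every real y ≥ 0, the algebraic identity (y − 1)(y^{3/2} − 1) − (3/2) y (y^{1/4} − 1)² = (1/2)(y^{1/4} − 1)² (2 + 4 y^{1/4} + 6 y^{1/2} + 8 y^{3/4} + 5 y + 8 y^{5/4} + 6 y^{3/2} + 4 y^{7/4} + 2 y²) holds; in particular the left-hand side is nonnegative for all y ≥ 0. -/
/-- For every real `y ≥ 0`,
`(y − 1)(y^{3/2} − 1) − (3/2) y (y^{1/4} − 1)²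
 = (1/2)(y^{1/4} − 1)² (2 + 4 y^{1/4} + 6 y^{1/2} + 8 y^{3/4} + 5 y + 8 y^{5/4}
    + 6 y^{3/2} + 4 y^{7/4} + 2 y²)`;
in particular the left-hand side is nonnegative. -/
theorem bfe_characteristic_factorization (y : ℝ) (hy : 0 ≤ y) :
    (y - 1) * (y ^ ((3 : ℝ) / 2) - 1) - (3 / 2) * y * (y ^ ((1 : ℝ) / 4) - 1) ^ 2
      = (1 / 2) * (y ^ ((1 : ℝ) / 4) - 1) ^ 2
          * (2 + 4 * y ^ ((1 : ℝ) / 4) + 6 * y ^ ((1 : ℝ) / 2) + 8 * y ^ ((3 : ℝ) / 4)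
              + 5 * y + 8 * y ^ ((5 : ℝ) / 4) + 6 * y ^ ((3 : ℝ) / 2)
              + 4 * y ^ ((7 : ℝ) / 4) + 2 * y ^ 2) ∧
    0 ≤ (y - 1) * (y ^ ((3 : ℝ) / 2) - 1) - (3 / 2) * y * (y ^ ((1 : ℝ) / 4) - 1) ^ 2 := by
  set t := y ^ ((1 : ℝ) / 4) with ht
  have ht0 : 0 ≤ t := Real.rpow_nonneg hy _
  have hk : ∀ k : ℕ, y ^ ((k : ℝ) / 4) = t ^ k := by
    intro k
    rw [ht, ← Real.rpow_natCast (y ^ ((1:ℝ)/4)) k, ← Real.rpow_mul hy]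
    ring_nf
  have h1 : y ^ ((1 : ℝ) / 2) = t ^ 2 := by rw [show (1:ℝ)/2 = (2:ℕ)/4 by norm_num, hk]
  have h3 : y ^ ((3 : ℝ) / 4) = t ^ 3 := by rw [show (3:ℝ)/4 = (3:ℕ)/4 by norm_num, hk]
  have h4 : y = t ^ 4 := by rw [show y = y ^ ((4:ℕ)/(4:ℝ)) by norm_num, hk]
  have h5 : y ^ ((5 : ℝ) / 4) = t ^ 5 := by rw [show (5:ℝ)/4 = (5:ℕ)/4 by norm_num, hk]
  have h6 : y ^ ((3 : ℝ) / 2) = t ^ 6 := by rw [show (3:ℝ)/2 = (6:ℕ)/4 by norm_num, hk]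
  have h7 : y ^ ((7 : ℝ) / 4) = t ^ 7 := by rw [show (7:ℝ)/4 = (7:ℕ)/4 by norm_num, hk]
  rw [h1, h3, h5, h6, h7]
  constructor
  · rw [h4]; ring
  · rw [h4]
    nlinarith [sq_nonneg (t - 1), sq_nonneg t, pow_nonneg ht0 3, pow_nonneg ht0 5, pow_nonneg ht0 7, pow_nonneg ht0 2, pow_nonneg ht0 4, pow_nonneg ht0 6, pow_nonneg ht0 8, sq_nonneg ((t-1)*t), sq_nonneg ((t-1)*t^2), sq_nonneg ((t-1)*t^3), sq_nonneg ((t-1)*t^4)]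
end

section
/- Let γ > 0, 0 < A_L < A_*, let c(A) = √(3γ/2) · A^{1/4}, and suppose u_* = u_L − √(γ (A_* − A_L)(A_*^{3/2} − A_L^{3/2})/(A_L A_*)) (the Rankine–Hugoniot jump relation across a left shock). Then u_* + c(A_*) ≤ u_L + c(A_L), i.e., the characteristic speed u_* + c_* in the star region is bounded above by u_L + c_L. -/
/-- Across a left shock of the blood flow equations (Rankine–Hugoniot jump
relation, `A_L < A_*`), with `c(A) = √(3γ/2) A^{1/4}`, the characteristic speed
`u_* + c(A_*)` in the star region is bounded above by `u_L + c(A_L)`. -/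
theorem bfe_left_shock_characteristic_bound (γ AL Astar uL ustar : ℝ)
    (hγ : 0 < γ) (hAL : 0 < AL) (hlt : AL < Astar)
    (hRH : ustar = uL - Real.sqrt (γ * (Astar - AL)
        * (Astar ^ ((3 : ℝ) / 2) - AL ^ ((3 : ℝ) / 2)) / (AL * Astar))) :
    ustar + Real.sqrt (3 * γ / 2) * Astar ^ ((1 : ℝ) / 4)
      ≤ uL + Real.sqrt (3 * γ / 2) * AL ^ ((1 : ℝ) / 4) := by
  have hAs : (0:ℝ) < Astar := lt_trans hAL hlt
  set a := AL ^ ((1:ℝ)/4) with ha_def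
  set b := Astar ^ ((1:ℝ)/4) with hb_def
  have ha : 0 < a := Real.rpow_pos_of_pos hAL _
  have hb : 0 < b := Real.rpow_pos_of_pos hAs _
  have hab : a < b := by
    apply Real.rpow_lt_rpow hAL.le hlt (by norm_num)
  have hAL4 : AL = a ^ 4 := by
    rw [ha_def, ← Real.rpow_natCast (AL ^ ((1:ℝ)/4)) 4, ← Real.rpow_mul hAL.le]
    norm_num
  have hAs4 : Astar = b ^ 4 := by
    rw [hb_def, ← Real.rpow_natCast (Astar ^ ((1:ℝ)/4)) 4, ← Real.rpow_mul hAs.le]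
    norm_num
  have hAL6 : AL ^ ((3:ℝ)/2) = a ^ 6 := by
    rw [ha_def, ← Real.rpow_natCast (AL ^ ((1:ℝ)/4)) 6, ← Real.rpow_mul hAL.le]
    norm_num
  have hAs6 : Astar ^ ((3:ℝ)/2) = b ^ 6 := by
    rw [hb_def, ← Real.rpow_natCast (Astar ^ ((1:ℝ)/4)) 6, ← Real.rpow_mul hAs.le]
    norm_num
  rw [hRH, hAL6, hAs6]
  have key : Real.sqrt (3 * γ / 2) * b - Real.sqrt (3 * γ / 2) * a
      ≤ Real.sqrt (γ * (Astar - AL) * (b ^ 6 - a ^ 6) / (AL * Astar)) := by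
    have h1 : Real.sqrt (3 * γ / 2) * b - Real.sqrt (3 * γ / 2) * a
        = Real.sqrt (3 * γ / 2 * (b - a) ^ 2) := by
      rw [Real.sqrt_mul (by positivity), Real.sqrt_sq (by linarith)]
      ring
    rw [h1]
    apply Real.sqrt_le_sqrt
    rw [hAL4, hAs4, le_div_iff₀ (by positivity)]
    have hfac : γ * (b ^ 4 - a ^ 4) * (b ^ 6 - a ^ 6)
        - 3 * γ / 2 * (b - a) ^ 2 * (a ^ 4 * b ^ 4)
        = γ * (b - a) ^ 2 * ((b^3 + b^2*a + b*a^2 + a^3)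
            * (b^5 + b^4*a + b^3*a^2 + b^2*a^3 + b*a^4 + a^5) - 3/2 * a^4 * b^4) := by
      ring
    nlinarith [mul_pos (pow_pos ha 3) (pow_pos hb 5), mul_pos (pow_pos ha 5) (pow_pos hb 3),
      mul_pos (pow_pos ha 4) (pow_pos hb 4), mul_pos (pow_pos ha 2) (pow_pos hb 6),
      mul_pos (pow_pos ha 6) (pow_pos hb 2), mul_pos (pow_pos ha 1) (pow_pos hb 7),
      mul_pos (pow_pos ha 7) (pow_pos hb 1), pow_pos ha 8, pow_pos hb 8,
      sq_nonneg (b - a), mul_pos hγ (mul_pos hγ hγ), hγ.le,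
      mul_nonneg (mul_nonneg hγ.le (sq_nonneg (b - a))) (mul_pos (pow_pos ha 4) (pow_pos hb 4)).le]
  linarith
end
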